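/- arXiv:1808.03553 — 3 statements merged into one kernel-verified Lean document; each statement's English description precedes it below -/
import Mathlib

section
/- Let A, B be strings of lengths m and n, let L = LCS(A,B) and Δ = n − L. If every nonzero entry of the density matrix K□ equals 1, then K□ has exactly Δ nonzero entries (pivotal points). -/
variable {α : Type*}

/-- LCS of two lists: the maximum length of a common sublist. -/
noncomputable def LCS (X Y : List α) : ℕ :=
  sSup {k | ∃ Z : List α, Z.length = k ∧ Z.Sublist X ∧ Z.Sublist Y}

/-- `substr S i j` is S[i..j]: the characters of S at (1-based) positions i+1,…,j. -/
def substr (S : List α) (i j : ℕ) : List α := (S.take j).drop i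

/-- The density matrix D□ of a matrix D. -/
def density (D : ℕ → ℕ → ℤ) (i j : ℕ) : ℤ :=
  D i j + D (i - 1) (j - 1) - D (i - 1) j - D i (j - 1)

/-- The all scores matrix K of A and B: K[i,j] = LCS(B[i..j], A) if i ≤ j, else j - i. -/
noncomputable def Kmat (A B : List α) (i j : ℕ) : ℤ :=
  if i ≤ j then (LCS (substr B i j) A : ℤ) else (j : ℤ) - (i : ℤ)

/-- The all scores matrix P of A and B: P[i,j] = LCS(B[i..n], A[0..j]). -/
noncomputable def Pmat (A B : List α) (i j : ℕ) : ℤ :=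
  (LCS (substr B i B.length) (substr A 0 j) : ℤ)

/-- nextmatch(i,σ,B): minimum (1-based) position i' with i < i' ≤ |B| and B[i'] = σ; ⊤ (∞) if none. -/
noncomputable def nextmatch (i : ℕ) (σ : α) (B : List α) : ℕ∞ :=
  sInf {k : ℕ∞ | ∃ k' : ℕ, k = (k' : ℕ∞) ∧ i < k' ∧ k' ≤ B.length ∧ B[k' - 1]? = some σ}

/-- prevmatch(j,σ,B): maximum (1-based) position i' with 1 ≤ i' ≤ j and B[i'] = σ; ⊥ (−∞) if none. -/
noncomputable def prevmatch (j : ℕ) (σ : α) (B : List α) : WithBot ℕ :=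
  sSup {k : WithBot ℕ | ∃ k' : ℕ, k = (k' : WithBot ℕ) ∧ 1 ≤ k' ∧ k' ≤ j ∧ B[k' - 1]? = some σ}

lemma LCS_nil (A : List α) : LCS ([] : List α) A = 0 := by
  have : {k | ∃ Z : List α, Z.length = k ∧ Z.Sublist [] ∧ Z.Sublist A} = {0} := by
    ext k
    constructor
    · rintro ⟨Z, hl, hs, -⟩
      simp [List.sublist_nil.mp hs] at hl; simp [← hl]
    · rintro rfl; exact ⟨[], rfl, by simp, by simp⟩
  rw [LCS, this, csSup_singleton]

lemma LCS_comm (X Y : List α) : LCS X Y = LCS Y X := by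
  unfold LCS
  congr 1
  ext k
  constructor <;> rintro ⟨Z, h1, h2, h3⟩ <;> exact ⟨Z, h1, h3, h2⟩

lemma LCS_le_length (X Y : List α) : LCS X Y ≤ X.length := by
  refine csSup_le ⟨0, ⟨[], rfl, List.nil_sublist _, List.nil_sublist _⟩⟩ ?_
  rintro k ⟨Z, rfl, hs, -⟩
  exact hs.length_le

lemma telesc (f : ℕ → ℤ) (n : ℕ) :
    ∑ j ∈ Finset.Icc 1 n, (f j - f (j - 1)) = f n - f 0 := by
  induction n with
  | zero => simp
  | succ k ih =>
    rw [Finset.sum_Icc_succ_top (by omega), ih]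
    simp


open scoped Classical in
theorem stmt_2 {α : Type*} (A B : List α) (m n : ℕ)
    (hA : A.length = m) (hB : B.length = n)
    (hMonge : ∀ i ∈ Finset.Icc 1 n, ∀ j ∈ Finset.Icc 1 n,
      density (Kmat A B) i j ≠ 0 → density (Kmat A B) i j = 1) :
    (((Finset.Icc 1 n) ×ˢ (Finset.Icc 1 n)).filter
      (fun p => density (Kmat A B) p.1 p.2 ≠ 0)).card = n - LCS A B := by
  classical
  set g : ℕ → ℕ → ℤ := Kmat A B with hg
  -- Key values of g
  have hnil : ∀ i, i ≤ n → substr B i i = [] := by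
    intro i hi
    simp [substr, List.drop_eq_nil_iff]
  have hgnn : g n n = 0 := by
    rw [hg, Kmat, if_pos le_rfl, hnil n le_rfl, LCS_nil]; norm_num
  have hg00 : g 0 0 = 0 := by
    rw [hg, Kmat, if_pos le_rfl, hnil 0 (Nat.zero_le _), LCS_nil]; norm_num
  have hsubB : substr B 0 n = B := by
    simp [substr, List.take_of_length_le hB.le]
  have hg0n : g 0 n = (LCS A B : ℤ) := by
    rw [hg, Kmat, if_pos (Nat.zero_le _), hsubB, LCS_comm]
  have hgn0 : g n 0 = -(n : ℤ) := by
    rcases Nat.eq_zero_or_pos n with h | h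
    · subst h; simpa using hg00
    · rw [hg, Kmat, if_neg (by omega)]; push_cast; ring
  -- Telescoping sum of densities
  have hsum : ∑ p ∈ (Finset.Icc 1 n) ×ˢ (Finset.Icc 1 n), density g p.1 p.2
      = (n : ℤ) - (LCS A B : ℤ) := by
    rw [Finset.sum_product]
    have inner : ∀ i, ∑ j ∈ Finset.Icc 1 n, density g i j
        = (g i n - g i 0) - (g (i-1) n - g (i-1) 0) := by
      intro i
      have : ∀ j, density g i j
          = (g i j - g i (j-1)) - (g (i-1) j - g (i-1) (j-1)) := by
        intro j; rw [density]; ring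
      simp only [this]
      rw [Finset.sum_sub_distrib, telesc (fun j => g i j), telesc (fun j => g (i-1) j)]
    simp only [inner]
    rw [telesc (fun i => g i n - g i 0)]
    rw [hgnn, hg00, hg0n, hgn0]
    ring
  -- The sum equals the cardinality of the filtered set
  have hcard : ∑ p ∈ (Finset.Icc 1 n) ×ˢ (Finset.Icc 1 n), density g p.1 p.2
      = ((((Finset.Icc 1 n) ×ˢ (Finset.Icc 1 n)).filter
          (fun p => density g p.1 p.2 ≠ 0)).card : ℤ) := by
    rw [← Finset.sum_filter_ne_zero]
    rw [Finset.card_eq_sum_ones, Nat.cast_sum]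
    apply Finset.sum_congr rfl
    intro p hp
    simp only [Finset.mem_filter, Finset.mem_product] at hp
    rw [hMonge p.1 hp.1.1 p.2 hp.1.2 hp.2]
    simp
  have hle : LCS A B ≤ n := by
    rw [LCS_comm]; rw [← hB]; exact LCS_le_length B A
  rw [hcard] at hsum
  omega
end

section
/- Let A, B be strings of lengths m and n, σ a character, and let K' be the all scores matrix of σA (σ prepended to A) and B. Then for all 0 ≤ i ≤ j ≤ n: if k = nextmatch(i,σ,B) < ∞ then K'[i,j] = max( K[i,j], K[k,j] + 1 ), and if nextmatch(i,σ,B) = ∞ then K'[i,j] = K[i,j]. -/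
variable {α : Type*}

private lemma lcs_bdd (X Y : List α) :
    BddAbove {k | ∃ Z : List α, Z.length = k ∧ Z.Sublist X ∧ Z.Sublist Y} :=
  ⟨X.length, by rintro k ⟨Z, rfl, h1, -⟩; exact h1.length_le⟩

private lemma length_le_LCS {Z X Y : List α} (h1 : Z.Sublist X) (h2 : Z.Sublist Y) :
    Z.length ≤ LCS X Y :=
  le_csSup (lcs_bdd X Y) ⟨Z, rfl, h1, h2⟩

private lemma LCS_spec (X Y : List α) :
    ∃ Z : List α, Z.length = LCS X Y ∧ Z.Sublist X ∧ Z.Sublist Y := by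
  have := Nat.sSup_mem (s := {k | ∃ Z : List α, Z.length = k ∧ Z.Sublist X ∧ Z.Sublist Y})
    ⟨0, [], rfl, List.nil_sublist _, List.nil_sublist _⟩ (lcs_bdd X Y)
  exact this

private lemma LCS_le {X Y : List α} {c : ℕ}
    (h : ∀ Z : List α, Z.Sublist X → Z.Sublist Y → Z.length ≤ c) : LCS X Y ≤ c := by
  obtain ⟨Z, hZ, h1, h2⟩ := LCS_spec X Y
  exact hZ ▸ h Z h1 h2

private lemma LCS_mono_cons (S A : List α) (σ : α) : LCS S A ≤ LCS S (σ :: A) := by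
  obtain ⟨Z, hZ, h1, h2⟩ := LCS_spec S A
  exact hZ ▸ length_le_LCS h1 (h2.trans (List.sublist_cons_self σ A))

private lemma LCS_cons_not_mem {S : List α} {σ : α} (h : σ ∉ S) (A : List α) :
    LCS S (σ :: A) = LCS S A := by
  refine le_antisymm (LCS_le fun Z h1 h2 => ?_) (LCS_mono_cons S A σ)
  rcases List.sublist_cons_iff.mp h2 with h2 | ⟨r, rfl, hr⟩
  · exact length_le_LCS h1 h2
  · exact absurd (h1.mem (List.mem_cons_self (a := σ) (l := r))) h

private lemma cons_sublist_split {σ : α} {l S₁ S₂ : List α} (hσ : σ ∉ S₁)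
    (h : (σ :: l).Sublist (S₁ ++ σ :: S₂)) : l.Sublist S₂ := by
  induction S₁ with
  | nil =>
    simp only [List.nil_append] at h
    rcases List.sublist_cons_iff.mp h with h | ⟨r, hr, hr2⟩
    · exact (List.sublist_cons_self σ l).trans h
    · injection hr with _ h2; exact h2 ▸ hr2
  | cons b S₁ ih =>
    have hσb : σ ≠ b := fun he => hσ (he ▸ List.mem_cons_self (a := b) (l := S₁))
    rcases List.sublist_cons_iff.mp h with h | ⟨r, hr, hr2⟩
    · exact ih (fun hm => hσ (List.mem_cons_of_mem b hm)) h
    · injection hr with h1; exact absurd h1 hσb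

private lemma LCS_cons_split (S₁ S₂ A : List α) (σ : α) (hσ : σ ∉ S₁) :
    LCS (S₁ ++ σ :: S₂) (σ :: A) = max (LCS (S₁ ++ σ :: S₂) A) (LCS S₂ A + 1) := by
  apply le_antisymm
  · apply LCS_le; intro Z h1 h2
    rcases List.sublist_cons_iff.mp h2 with h2 | ⟨r, rfl, hr⟩
    · exact le_max_of_le_left (length_le_LCS h1 h2)
    · have hr2 : r.Sublist S₂ := cons_sublist_split hσ h1
      have := length_le_LCS hr2 hr
      refine le_max_of_le_right ?_
      simpa using Nat.succ_le_succ this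
  · apply max_le
    · exact LCS_mono_cons _ _ _
    · obtain ⟨Z, hZ, h1, h2⟩ := LCS_spec S₂ A
      have hs : (σ :: Z).Sublist (S₁ ++ σ :: S₂) :=
        (h1.cons₂ σ).trans (List.sublist_append_right S₁ _)
      have := length_le_LCS hs (h2.cons₂ σ)
      simpa [hZ] using this


private lemma nextmatch_top {i : ℕ} {σ : α} {B : List α} (h : nextmatch i σ B = ⊤) :
    ∀ k' : ℕ, i < k' → k' ≤ B.length → B[k' - 1]? ≠ some σ := by
  intro k' h1 h2 h3
  have := sInf_eq_top.mp h (k' : ℕ∞) ⟨k', rfl, h1, h2, h3⟩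
  exact absurd this (by simp)

private lemma nextmatch_coe {i k : ℕ} {σ : α} {B : List α} (h : nextmatch i σ B = (k : ℕ∞)) :
    (i < k ∧ k ≤ B.length ∧ B[k - 1]? = some σ) ∧
      ∀ k' : ℕ, i < k' → k' ≤ B.length → B[k' - 1]? = some σ → k ≤ k' := by
  set s : Set ℕ∞ :=
    {x : ℕ∞ | ∃ k' : ℕ, x = (k' : ℕ∞) ∧ i < k' ∧ k' ≤ B.length ∧ B[k' - 1]? = some σ} with hs
  have hmins : ∀ k' : ℕ, i < k' → k' ≤ B.length → B[k' - 1]? = some σ → k ≤ k' := by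
    intro k' h1 h2 h3
    have hle : nextmatch i σ B ≤ (k' : ℕ∞) := sInf_le ⟨k', rfl, h1, h2, h3⟩
    rw [h] at hle; exact_mod_cast hle
  refine ⟨?_, hmins⟩
  have hne : s.Nonempty := by
    by_contra hne
    rw [Set.not_nonempty_iff_eq_empty] at hne
    have : nextmatch i σ B = ⊤ := by rw [nextmatch, ← hs, hne, sInf_empty]
    rw [h] at this
    exact absurd this (by simp)
  obtain ⟨m, hm, hmin⟩ := (wellFounded_lt (α := ℕ∞)).has_min s hne
  have heq : nextmatch i σ B = m :=
    le_antisymm (sInf_le hm) (le_sInf fun x hx => not_lt.mp (hmin x hx))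
  rw [h] at heq
  obtain ⟨k', hk', h1, h2, h3⟩ := hm
  rw [← heq] at hk'
  have hkk : k = k' := by exact_mod_cast hk'
  subst hkk
  exact ⟨h1, h2, h3⟩

-- substr lemmas
private lemma mem_substr {σ : α} {B : List α} {i j : ℕ} (hj : j ≤ B.length)
    (h : σ ∈ substr B i j) : ∃ k' : ℕ, i < k' ∧ k' ≤ j ∧ B[k' - 1]? = some σ := by
  obtain ⟨t, ht, hget⟩ := List.mem_iff_getElem.mp h
  have hlen : (substr B i j).length = j - i := by simp [substr]; omega
  rw [hlen] at ht
  have hlt : i + t < B.length := by omega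
  refine ⟨i + t + 1, by omega, by omega, ?_⟩
  have : B[i + t]? = some B[i + t] := List.getElem?_eq_getElem hlt
  simp only [Nat.add_sub_cancel, this]
  congr 1
  rw [← hget]
  simp [substr, List.getElem_drop, List.getElem_take]

private lemma substr_append {B : List α} {i c j : ℕ} (h1 : i ≤ c) (h2 : c ≤ j)
    (h3 : j ≤ B.length) : substr B i j = substr B i c ++ substr B c j := by
  unfold substr
  have h4 : (B.take j).take c = B.take c := by rw [List.take_take, min_eq_left h2]
  conv_lhs => rw [← List.take_append_drop c (B.take j)]
  rw [List.drop_append, h4]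
  have h5 : (B.take c).length = c := by simp; omega
  rw [h5]
  have : i - c = 0 := by omega
  rw [this, List.drop_zero]

private lemma substr_cons {B : List α} {c j : ℕ} (h1 : c < j) (h2 : j ≤ B.length) :
    substr B c j = B[c]'(by omega) :: substr B (c + 1) j := by
  unfold substr
  rw [List.drop_eq_getElem_cons (by simp; omega)]
  congr 1
  exact List.getElem_take

/-- effect of prepending σ to A on the all scores matrix K. -/
theorem stmt_4 {α : Type*} (A B : List α) (m n : ℕ)
    (hA : A.length = m) (hB : B.length = n) (σ : α) :
    ∀ i j : ℕ, i ≤ j → j ≤ n →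
      (∀ k : ℕ, nextmatch i σ B = (k : ℕ∞) →
        Kmat (σ :: A) B i j = max (Kmat A B i j) (Kmat A B k j + 1)) ∧
      (nextmatch i σ B = ⊤ → Kmat (σ :: A) B i j = Kmat A B i j) := by
  subst hA hB
  intro i j hij hjn
  constructor
  · intro k hk
    obtain ⟨⟨hik, hkB, hkσ⟩, hmin⟩ := nextmatch_coe hk
    by_cases hkj : k ≤ j
    · -- k ≤ j : σ occurs in the substring
      have hBk : B[k - 1]'(by omega) = σ := by
        have := List.getElem?_eq_getElem (l := B) (i := k - 1) (by omega)
        rw [this] at hkσ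
        exact Option.some_injective _ hkσ
      have hsplit : substr B i j = substr B i (k - 1) ++ σ :: substr B k j := by
        rw [substr_append (show i ≤ k - 1 by omega) (show k - 1 ≤ j by omega) hjn,
          substr_cons (show k - 1 < j by omega) hjn, hBk,
          show k - 1 + 1 = k by omega]
      have hnm : σ ∉ substr B i (k - 1) := by
        intro hmem
        obtain ⟨k', h1, h2, h3⟩ := mem_substr (by omega) hmem
        have := hmin k' h1 (by omega) h3
        omega
      rw [Kmat, Kmat, Kmat, if_pos hij, if_pos hij, if_pos hkj, hsplit,
        LCS_cons_split _ _ _ _ hnm]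
      push_cast [Nat.cast_max]
      ring_nf
    · -- k > j : no occurrence of σ in the substring
      have hne : σ ∉ substr B i j := by
        intro hmem
        obtain ⟨k', h1, h2, h3⟩ := mem_substr hjn hmem
        have := hmin k' h1 (by omega) h3
        omega
      rw [Kmat, Kmat, Kmat, if_pos hij, if_pos hij, if_neg hkj,
        LCS_cons_not_mem hne]
      rw [max_eq_left]
      have h0 : (j : ℤ) - (k : ℤ) + 1 ≤ 0 := by
        have : j < k := by omega
        push_cast
        omega
      exact h0.trans (Int.natCast_nonneg _)
  · intro htop
    have hne : σ ∉ substr B i j := by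
      intro hmem
      obtain ⟨k', h1, h2, h3⟩ := mem_substr hjn hmem
      exact nextmatch_top htop k' h1 (by omega) h3
    rw [Kmat, Kmat, if_pos hij, if_pos hij, LCS_cons_not_mem hne]
end

section
/- Let A, B be strings of lengths m and n, σ a character, and define Diff[i,j] = LCS(B[i..n], σ·A[0..j]) − P[i,j] for (i,j) ∈ [0:n]×[0:m]. Assume every entry of the density matrix P□ is nonpositive. Then for all 0 ≤ i ≤ n and 0 ≤ j ≤ m: Diff[i,j] = 1 if and only if k = nextmatch(i,σ,B) < ∞ and P□[i',j'] = 0 for all i' with i+1 ≤ i' ≤ k and all j' with 1 ≤ j' ≤ j (i.e., there are no pivotal points in the submatrix of P□ with rows i+1,…,k and columns 1,…,j). -/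
variable {α : Type*}

namespace Scratch

lemma lcsSet_bdd (X Y : List α) :
    BddAbove {k | ∃ Z : List α, Z.length = k ∧ Z.Sublist X ∧ Z.Sublist Y} :=
  ⟨X.length, fun k ⟨Z, hZ, hX, _⟩ => hZ ▸ hX.length_le⟩

lemma lcsSet_nonempty (X Y : List α) :
    Set.Nonempty {k | ∃ Z : List α, Z.length = k ∧ Z.Sublist X ∧ Z.Sublist Y} :=
  ⟨0, [], rfl, List.nil_sublist _, List.nil_sublist _⟩

lemma length_le_LCS {Z X Y : List α} (hX : Z.Sublist X) (hY : Z.Sublist Y) :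
    Z.length ≤ LCS X Y :=
  le_csSup (lcsSet_bdd X Y) ⟨Z, rfl, hX, hY⟩

lemma exists_LCS (X Y : List α) :
    ∃ Z : List α, Z.length = LCS X Y ∧ Z.Sublist X ∧ Z.Sublist Y :=
  Nat.sSup_mem (lcsSet_nonempty X Y) (lcsSet_bdd X Y)

lemma LCS_mono_left {X X' : List α} (h : X.Sublist X') (Y : List α) :
    LCS X Y ≤ LCS X' Y := by
  obtain ⟨Z, hl, hX, hY⟩ := exists_LCS X Y
  exact hl ▸ length_le_LCS (hX.trans h) hY

lemma LCS_mono_right (X : List α) {Y Y' : List α} (h : Y.Sublist Y') :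
    LCS X Y ≤ LCS X Y' := by
  obtain ⟨Z, hl, hX, hY⟩ := exists_LCS X Y
  exact hl ▸ length_le_LCS hX (hY.trans h)

lemma LCS_nil_right (X : List α) : LCS X ([] : List α) = 0 := by
  obtain ⟨Z, hl, _, hY⟩ := exists_LCS X ([] : List α)
  rw [← hl, List.sublist_nil.mp hY]; rfl

lemma LCS_cons_of_not_mem {X : List α} {σ : α} (h : σ ∉ X) (Y : List α) :
    LCS X (σ :: Y) = LCS X Y := by
  refine le_antisymm ?_ (LCS_mono_right X (List.sublist_cons_self σ Y))
  obtain ⟨Z, hl, hX, hY⟩ := exists_LCS X (σ :: Y)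
  rw [List.sublist_cons_iff] at hY
  rcases hY with hY | ⟨r, rfl, hr⟩
  · exact hl ▸ length_le_LCS hX hY
  · exact absurd (hX.mem List.mem_cons_self) h

lemma sublist_of_cons_sublist_split {Z' X₁ X₂ : List α} {σ : α}
    (h : (σ :: Z').Sublist (X₁ ++ σ :: X₂)) (h1 : σ ∉ X₁) : Z'.Sublist X₂ := by
  induction X₁ with
  | nil => exact List.cons_sublist_cons.mp h
  | cons b X₁ ih =>
    cases h with
    | cons _ h => exact ih h (fun hm => h1 (List.mem_cons_of_mem b hm))
    | cons_cons => exact absurd List.mem_cons_self h1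

lemma LCS_cons_split {X₁ X₂ : List α} (σ : α) (h1 : σ ∉ X₁) (Y : List α) :
    LCS (X₁ ++ σ :: X₂) (σ :: Y) = max (LCS (X₁ ++ σ :: X₂) Y) (1 + LCS X₂ Y) := by
  apply le_antisymm
  · obtain ⟨Z, hl, hX, hY⟩ := exists_LCS (X₁ ++ σ :: X₂) (σ :: Y)
    rw [List.sublist_cons_iff] at hY
    rcases hY with hY | ⟨r, rfl, hr⟩
    · exact le_max_of_le_left (hl ▸ length_le_LCS hX hY)
    · refine le_max_of_le_right ?_
      have := length_le_LCS (sublist_of_cons_sublist_split hX h1) hr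
      simp only [← hl, List.length_cons]; omega
  · refine max_le (LCS_mono_right _ (List.sublist_cons_self σ Y)) ?_
    obtain ⟨Z, hl, hX, hY⟩ := exists_LCS X₂ Y
    have hsub : (σ :: Z).Sublist (X₁ ++ σ :: X₂) :=
      List.sublist_append_of_sublist_right (List.cons_sublist_cons.mpr hX)
    have := length_le_LCS hsub (List.cons_sublist_cons.mpr hY)
    simpa [hl, Nat.add_comm] using this

lemma exists_first_split {l : List α} {σ : α} (h : σ ∈ l) :
    ∃ s t, l = s ++ σ :: t ∧ σ ∉ s := by
  induction l with
  | nil => simp at h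
  | cons b l ih =>
    by_cases hb : b = σ
    · exact ⟨[], l, by simp [hb], by simp⟩
    · have h' : σ ∈ l := by
        rcases List.mem_cons.mp h with h | h
        · exact absurd h.symm hb
        · exact h
      rcases ih h' with ⟨s, t, rfl, hs⟩
      exact ⟨b :: s, t, rfl, by simp [hs]; exact fun hh => hb hh.symm⟩

end Scratch

namespace Scratch2
open Scratch

lemma Pmat_eq (A B : List α) (i j : ℕ) :
    Pmat A B i j = (LCS (B.drop i) (A.take j) : ℤ) := by
  simp [Pmat, substr, List.take_length]

lemma Pmat_zero (A B : List α) (i : ℕ) : Pmat A B i 0 = 0 := by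
  simp [Pmat_eq, LCS_nil_right]

lemma Pmat_anti (A B : List α) {i k : ℕ} (h : i ≤ k) (j : ℕ) :
    Pmat A B k j ≤ Pmat A B i j := by
  rw [Pmat_eq, Pmat_eq]
  have : B.drop k = (B.drop i).drop (k - i) := by
    rw [List.drop_drop]; congr 1; omega
  exact_mod_cast LCS_mono_left (this ▸ List.drop_sublist (k - i) (B.drop i)) _

lemma density_row {A B : List α} {i' j' : ℕ} (hi : 1 ≤ i') (hj : 1 ≤ j') :
    density (Pmat A B) i' j' =
      (Pmat A B i' j' - Pmat A B (i' - 1) j') -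
      (Pmat A B i' (j' - 1) - Pmat A B (i' - 1) (j' - 1)) := by
  simp [density]; ring

/-- f antitone: for fixed row i', j₁ ≤ j₂ → f j₂ ≤ f j₁ -/
lemma f_anti {A B : List α} {m n : ℕ} (hA : A.length = m) (hB : B.length = n)
    (hNonpos : ∀ i, 1 ≤ i → i ≤ n → ∀ j, 1 ≤ j → j ≤ m → density (Pmat A B) i j ≤ 0)
    {i' : ℕ} (hi1 : 1 ≤ i') (hin : i' ≤ n) {j₁ j₂ : ℕ} (h12 : j₁ ≤ j₂) (h2m : j₂ ≤ m) :
    Pmat A B i' j₂ - Pmat A B (i' - 1) j₂ ≤ Pmat A B i' j₁ - Pmat A B (i' - 1) j₁ := by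
  induction j₂, h12 using Nat.le_induction with
  | base => exact le_refl _
  | succ j₂ h12 ih =>
    have h1 := hNonpos i' hi1 hin (j₂ + 1) (by omega) h2m
    rw [density_row hi1 (by omega)] at h1
    simp only [Nat.add_sub_cancel] at h1
    have := ih (by omega)
    omega

lemma row_iff {A B : List α} {m n : ℕ} (hA : A.length = m) (hB : B.length = n)
    (hNonpos : ∀ i, 1 ≤ i → i ≤ n → ∀ j, 1 ≤ j → j ≤ m → density (Pmat A B) i j ≤ 0)
    {i' j : ℕ} (hi1 : 1 ≤ i') (hin : i' ≤ n) (hjm : j ≤ m) :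
    (∀ j', 1 ≤ j' → j' ≤ j → density (Pmat A B) i' j' = 0) ↔
      Pmat A B i' j = Pmat A B (i' - 1) j := by
  constructor
  · intro h
    induction j with
    | zero => rw [Pmat_zero, Pmat_zero]
    | succ j ih =>
      have h1 := h (j + 1) (by omega) le_rfl
      rw [density_row hi1 (by omega)] at h1
      simp only [Nat.add_sub_cancel] at h1
      have h2 := ih (by omega) (fun j' a b => h j' a (by omega))
      omega
  · intro h j' hj1 hjj
    have h0 : Pmat A B i' 0 - Pmat A B (i' - 1) 0 = 0 := by rw [Pmat_zero, Pmat_zero]; ring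
    have ha := f_anti hA hB hNonpos hi1 hin (Nat.zero_le j') (by omega)
    have hb := f_anti hA hB hNonpos hi1 hin hjj hjm
    have hc := f_anti hA hB hNonpos hi1 hin (Nat.sub_le j' 1) (by omega)
    have hd := f_anti hA hB hNonpos hi1 hin (Nat.zero_le (j'-1)) (by omega)
    rw [density_row hi1 hj1]
    omega

lemma block_iff {A B : List α} {m n : ℕ} (hA : A.length = m) (hB : B.length = n)
    (hNonpos : ∀ i, 1 ≤ i → i ≤ n → ∀ j, 1 ≤ j → j ≤ m → density (Pmat A B) i j ≤ 0)
    {i k j : ℕ} (hik : i ≤ k) (hkn : k ≤ n) (hjm : j ≤ m) :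
    (∀ i' j', i + 1 ≤ i' → i' ≤ k → 1 ≤ j' → j' ≤ j → density (Pmat A B) i' j' = 0) ↔
      Pmat A B k j = Pmat A B i j := by
  constructor
  · intro h
    induction k, hik using Nat.le_induction with
    | base => rfl
    | succ k hik ih =>
      have h1 : Pmat A B (k+1) j = Pmat A B k j := by
        have := (row_iff hA hB hNonpos (by omega) hkn hjm).mp
          (fun j' a b => h (k+1) j' (by omega) le_rfl a b)
        simpa using this
      rw [h1]
      exact ih (by omega) (fun i' j' a b c d => h i' j' a (by omega) c d)
  · intro h i' j' hi1 hik' hj1 hjj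
    have e1 : Pmat A B k j ≤ Pmat A B i' j := Pmat_anti A B hik' j
    have e2 : Pmat A B i' j ≤ Pmat A B (i' - 1) j := Pmat_anti A B (by omega) j
    have e3 : Pmat A B (i' - 1) j ≤ Pmat A B i j := Pmat_anti A B (by omega) j
    exact (row_iff hA hB hNonpos (by omega) (le_trans hik' hkn) hjm).mpr (by omega) j' hj1 hjj

end Scratch2

namespace Scratch3
open Scratch Scratch2

lemma mem_of_getElem?' {s : List α} {σ : α} {j : ℕ} (h : s[j]? = some σ) : σ ∈ s := by
  obtain ⟨h1, h2⟩ := List.getElem?_eq_some_iff.mp h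
  exact h2 ▸ s.getElem_mem h1

lemma nextmatch_top {i : ℕ} {σ : α} {B : List α} (h : σ ∉ B.drop i) :
    nextmatch i σ B = ⊤ := by
  rw [nextmatch]
  convert sInf_empty
  · rfl
  rw [Set.eq_empty_iff_forall_notMem]
  rintro x ⟨k', rfl, hik, hkB, hget⟩
  apply h
  have : (B.drop i)[k' - 1 - i]? = B[i + (k' - 1 - i)]? := List.getElem?_drop
  rw [show i + (k' - 1 - i) = k' - 1 by omega] at this
  exact mem_of_getElem?' (this.trans hget)

lemma nextmatch_split {i : ℕ} {σ : α} {B : List α} {s t : List α}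
    (hi : i ≤ B.length) (hsplit : B.drop i = s ++ σ :: t) (hs : σ ∉ s) :
    nextmatch i σ B = ((i + s.length + 1 : ℕ) : ℕ∞) := by
  have hlen : i + s.length + 1 ≤ B.length := by
    have := congrArg List.length hsplit
    simp [List.length_drop] at this
    omega
  have hget : B[i + s.length]? = some σ := by
    have h1 : (B.drop i)[s.length]? = B[i + s.length]? := List.getElem?_drop
    rw [← h1, hsplit, List.getElem?_append_right le_rfl]
    simp
  apply le_antisymm
  · exact sInf_le ⟨i + s.length + 1, rfl, by omega, hlen, by simpa using hget⟩
  · refine le_sInf ?_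
    rintro x ⟨k', rfl, hik, hkB, hget'⟩
    rw [Nat.cast_le]
    by_contra hlt
    push_neg at hlt
    have hk1 : k' - 1 - i < s.length := by omega
    have h1 : (B.drop i)[k' - 1 - i]? = B[i + (k' - 1 - i)]? := List.getElem?_drop
    rw [show i + (k' - 1 - i) = k' - 1 by omega, hget', hsplit] at h1
    rw [List.getElem?_append] at h1
    simp only [hk1, if_pos] at h1
    exact hs (mem_of_getElem?' h1)

end Scratch3


/-- Diff[i,j] = 1 iff k = nextmatch(i,σ,B) < ∞ and there are no
pivotal points in the submatrix of P□ with rows i+1,…,k and columns 1,…,j. -/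
theorem stmt_13 {α : Type*} (A B : List α) (m n : ℕ)
    (hA : A.length = m) (hB : B.length = n) (σ : α)
    (hNonpos : ∀ i, 1 ≤ i → i ≤ n → ∀ j, 1 ≤ j → j ≤ m →
      density (Pmat A B) i j ≤ 0) :
    ∀ i ≤ n, ∀ j ≤ m,
      ((LCS (substr B i n) (σ :: substr A 0 j) : ℤ) - Pmat A B i j = 1 ↔
        ∃ k : ℕ, nextmatch i σ B = (k : ℕ∞) ∧
          ∀ i' j', i + 1 ≤ i' → i' ≤ k → 1 ≤ j' → j' ≤ j →
            density (Pmat A B) i' j' = 0) := by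
  open Scratch Scratch2 Scratch3 in
  intro i hi j hj
  have hsub : substr B i n = B.drop i := by rw [← hB, substr, List.take_length]
  have hsubA : substr A 0 j = A.take j := by rw [substr, List.drop_zero]
  by_cases hmem : σ ∈ B.drop i
  · obtain ⟨s, t, hsplit, hs⟩ := Scratch.exists_first_split hmem
    set k := i + s.length + 1 with hk
    have hnext : nextmatch i σ B = (k : ℕ∞) :=
      Scratch3.nextmatch_split (by omega) hsplit hs
    have hkn : k ≤ n := by
      have := congrArg List.length hsplit
      simp [List.length_drop] at this
      omega
    have ht : t = B.drop k := by
      have h2 := congrArg (List.drop (s.length + 1)) hsplit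
      rw [List.drop_drop, show i + (s.length + 1) = k from by omega] at h2
      simpa using h2.symm
    have hLCS : LCS (B.drop i) (σ :: A.take j) =
        max (LCS (B.drop i) (A.take j)) (1 + LCS (B.drop k) (A.take j)) := by
      rw [hsplit, Scratch.LCS_cons_split σ hs, ← hsplit, ht]
    set p := LCS (B.drop i) (A.take j) with hp
    set q := LCS (B.drop k) (A.take j) with hq
    have hPi : Pmat A B i j = (p : ℤ) := Scratch2.Pmat_eq A B i j
    have hPk : Pmat A B k j = (q : ℤ) := Scratch2.Pmat_eq A B k j
    have hqp : q ≤ p := by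
      have := Scratch2.Pmat_anti A B (show i ≤ k by omega) j
      rw [hPi, hPk] at this; exact_mod_cast this
    have hblock := Scratch2.block_iff hA hB hNonpos (show i ≤ k by omega) hkn hj
    rw [hsub, hsubA, hLCS, hPi]
    constructor
    · intro h
      refine ⟨k, hnext, hblock.mpr ?_⟩
      rw [hPi, hPk]
      rcases le_or_gt (1 + q) p with hle | hlt
      · rw [max_eq_left hle] at h; omega
      · rw [max_eq_right (by omega)] at h
        have hqp' : q = p := by push_cast at h; omega
        rw [hqp']
    · rintro ⟨k', hk', hdens⟩
      have hkk : k' = k := by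
        rw [hnext] at hk'
        exact_mod_cast hk'.symm
      subst hkk
      have heq : Pmat A B k j = Pmat A B i j := hblock.mp hdens
      rw [hPi, hPk] at heq
      have hq' : q = p := by exact_mod_cast heq
      rw [hq', max_eq_right (by omega)]
      push_cast; ring
  · rw [hsub, hsubA, Scratch.LCS_cons_of_not_mem hmem, Scratch2.Pmat_eq]
    constructor
    · intro h; simp at h
    · rintro ⟨k, hk, -⟩
      rw [Scratch3.nextmatch_top hmem] at hk
      exact absurd hk.symm (by simp)
end
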